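/- (Theorem 3, essential content) Under the hypotheses of Lemma 3 (connected communication graph, existence of an extreme agent, and \bar π_j(k) > ε for every follower j and every k ∈ {1,…,δ}), for any weights w_1,…,w_f > 0, any constants η_1,…,η_f > 0, and any velocity vector v ∈ ℝ^{nm}, define ψ_{c,1}(p,v) = ∇_p h_{r,c}(p)·v + η_c h_{r,c}(p). Then Σ_{c=1}^f w_c e^{−w_c ψ_{c,1}(p,v)} ∇_p h_{r,c}(p) ≠ 0 in ℝ^{nm}. (This is the condition making the composed function φ_r(x,w) = 1 − Σ_c e^{−w_c ψ_{c,1}(x)} a valid CBF of relative degree 1 for the double-integrator system with unbounded inputs.) -/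

import Mathlib

open scoped BigOperators

/-- The parametrized sigmoid function σ_{s,q}(y) = (1+q)/(1 + q⁻¹ e^{-s y}) − q. -/
noncomputable def sigmaFn (s q y : ℝ) : ℝ :=
  (1 + q) / (1 + q⁻¹ * Real.exp (-(s * y))) - q

/-- Squared inter-robot distance `Δ_{ij}² = ∑_b (p_{ib} − p_{jb})²`. -/
noncomputable def dsq {n m : ℕ} (p : Fin n → Fin m → ℝ) (i j : Fin n) : ℝ :=
  ∑ b, (p i b - p j b) ^ 2

/-- Smoothed adjacency entry: `σ_{s_A,q_A}((R² − Δ_{ij}²)³)` if `i ≠ j` and `Δ_{ij} < R`,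
and `0` otherwise. -/
noncomputable def barAdj (sA qA R : ℝ) {n m : ℕ} (p : Fin n → Fin m → ℝ)
    (i j : Fin n) : ℝ :=
  if i ≠ j ∧ dsq p i j < R ^ 2 then sigmaFn sA qA ((R ^ 2 - dsq p i j) ^ 3) else 0

/-- Smoothed bootstrap-percolation values: leaders `j < l` are pinned at `1`; each follower
`j` updates via `σ_{s,q}(∑_i \bar a_{ij} ⋅ \bar π_i(k) − r)` (leaders contributing
`\bar a_{ij} ⋅ 1`). -/
noncomputable def piBar (s q sA qA R : ℝ) (l r : ℕ) {n m : ℕ} : ℕ → (Fin n → Fin m → ℝ) → Fin n → ℝ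
  | 0 => fun _ j => if (j : ℕ) < l then 1 else 0
  | k + 1 => fun p j =>
      if (j : ℕ) < l then 1
      else sigmaFn s q ((∑ i, barAdj sA qA R p i j * piBar s q sA qA R l r k p i) - r)

/-- The candidate barrier function for follower `j`: `h(p) = \bar π_j(δ)(p) − ε`. -/
noncomputable def hBarrier (s q sA qA R ε : ℝ) (l r δ : ℕ) {n m : ℕ} (j : Fin n)
    (p : Fin n → Fin m → ℝ) : ℝ :=
  piBar s q sA qA R l r δ p j - ε

/-- The unit coordinate direction of agent `I`, dimension `b`, in the stacked position space. -/
def coordDir {n m : ℕ} (I : Fin n) (b : Fin m) : Fin n → Fin m → ℝ :=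
  fun i d => if i = I ∧ d = b then 1 else 0

/-- The distance-based communication graph on positions `p`. -/
def commGraph (R : ℝ) {n m : ℕ} (p : Fin n → Fin m → ℝ) : SimpleGraph (Fin n) :=
  SimpleGraph.fromRel (fun i j => dsq p i j < R ^ 2)

/-- Agent `I` is an extreme agent at dimension `b`: its `b`-th position component is
strictly largest or strictly smallest among all agents. -/
def IsExtremeAgent {n m : ℕ} (p : Fin n → Fin m → ℝ) (I : Fin n) (b : Fin m) : Prop :=
  (∀ j : Fin n, j ≠ I → p j b < p I b) ∨ (∀ j : Fin n, j ≠ I → p I b < p j b)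

section Sigma
variable {s q y : ℝ}

lemma sigma_denom_pos (hq : 0 < q) : 0 < 1 + q⁻¹ * Real.exp (-(s * y)) := by
  have := Real.exp_pos (-(s * y)); have : 0 < q⁻¹ * Real.exp (-(s*y)) :=
    mul_pos (inv_pos.2 hq) (Real.exp_pos _)
  linarith

lemma sigmaFn_alt (hq : 0 < q) :
    sigmaFn s q y = (1 - Real.exp (-(s * y))) / (1 + q⁻¹ * Real.exp (-(s * y))) := by
  have hD := sigma_denom_pos (s := s) (y := y) hq
  rw [sigmaFn, eq_div_iff (ne_of_gt hD), sub_mul, div_mul_cancel₀ _ (ne_of_gt hD)]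
  have hq' : q * q⁻¹ = 1 := mul_inv_cancel₀ (ne_of_gt hq)
  have : q * (1 + q⁻¹ * Real.exp (-(s * y))) = q + Real.exp (-(s * y)) := by
    rw [mul_add, ← mul_assoc, hq', one_mul, mul_one]
  linarith

lemma sigmaFn_nonpos (hq : 0 < q) (hs : 0 < s) (hy : y ≤ 0) : sigmaFn s q y ≤ 0 := by
  rw [sigmaFn_alt hq]
  apply div_nonpos_of_nonpos_of_nonneg
  · have : (1:ℝ) ≤ Real.exp (-(s * y)) := Real.one_le_exp (by nlinarith)
    linarith
  · exact le_of_lt (sigma_denom_pos hq)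

lemma sigmaFn_pos (hq : 0 < q) (hs : 0 < s) (hy : 0 < y) : 0 < sigmaFn s q y := by
  rw [sigmaFn_alt hq]
  apply div_pos _ (sigma_denom_pos hq)
  have : Real.exp (-(s * y)) < 1 := Real.exp_lt_one_iff.2 (by nlinarith)
  linarith

lemma sigmaFn_nonneg (hq : 0 < q) (hs : 0 < s) (hy : 0 ≤ y) : 0 ≤ sigmaFn s q y := by
  rw [sigmaFn_alt hq]
  apply div_nonneg _ (le_of_lt (sigma_denom_pos hq))
  have : Real.exp (-(s * y)) ≤ 1 := Real.exp_le_one_iff.2 (by nlinarith)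
  linarith

lemma sigmaFn_le (hq : 0 < q) (hs : 0 < s) (hy : 0 ≤ y) : sigmaFn s q y ≤ s * y := by
  rw [sigmaFn_alt hq]
  have h1 : 1 - Real.exp (-(s * y)) ≤ s * y := by
    have := Real.add_one_le_exp (-(s * y)); linarith
  have h2 : 0 ≤ 1 - Real.exp (-(s * y)) := by
    have : Real.exp (-(s * y)) ≤ 1 := Real.exp_le_one_iff.2 (by nlinarith)
    linarith
  have hD : (1:ℝ) ≤ 1 + q⁻¹ * Real.exp (-(s * y)) := by
    have : 0 < q⁻¹ * Real.exp (-(s*y)) := mul_pos (inv_pos.2 hq) (Real.exp_pos _)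
    linarith
  calc (1 - Real.exp (-(s * y))) / (1 + q⁻¹ * Real.exp (-(s * y)))
      ≤ (1 - Real.exp (-(s * y))) / 1 := by
        apply div_le_div_of_nonneg_left h2 (by linarith) hD
    _ ≤ s * y := by rwa [div_one]

noncomputable def sigmaDeriv (s q y : ℝ) : ℝ :=
  (1 + q) * (s * (q⁻¹ * Real.exp (-(s * y)))) / (1 + q⁻¹ * Real.exp (-(s * y))) ^ 2

lemma sigmaDeriv_pos (hq : 0 < q) (hs : 0 < s) : 0 < sigmaDeriv s q y := by
  have hD := sigma_denom_pos (s := s) (y := y) hq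
  have he := Real.exp_pos (-(s * y))
  apply div_pos
  · have : 0 < q⁻¹ := inv_pos.2 hq
    positivity
  · positivity

lemma hasDerivAt_sigmaFn (hq : 0 < q) (y : ℝ) :
    HasDerivAt (sigmaFn s q) (sigmaDeriv s q y) y := by
  have hD := sigma_denom_pos (s := s) (y := y) hq
  have h1 : HasDerivAt (fun y : ℝ => -(s * y)) (-s) y := by
    simpa using ((hasDerivAt_id y).const_mul s).fun_neg
  have h2 : HasDerivAt (fun y : ℝ => Real.exp (-(s * y))) (Real.exp (-(s * y)) * (-s)) y :=
    h1.exp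
  have h3 : HasDerivAt (fun y : ℝ => 1 + q⁻¹ * Real.exp (-(s * y)))
      (q⁻¹ * (Real.exp (-(s * y)) * (-s))) y := (h2.const_mul q⁻¹).const_add 1
  have h4 := ((h3.inv (ne_of_gt hD)).const_mul (1 + q)).sub_const q
  have : HasDerivAt (sigmaFn s q)
      ((1 + q) * (-(q⁻¹ * (Real.exp (-(s * y)) * (-s))) / (1 + q⁻¹ * Real.exp (-(s * y))) ^ 2)) y := by
    refine h4.congr_deriv ?_ |>.congr_of_eventuallyEq ?_
    · rfl
    · filter_upwards with z
      rw [sigmaFn, div_eq_mul_inv]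
      rfl
  convert this using 1
  rw [sigmaDeriv]
  ring

end Sigma
section Dsq

variable {n m : ℕ}

lemma dsq_nonneg (p : Fin n → Fin m → ℝ) (i j : Fin n) : 0 ≤ dsq p i j :=
  Finset.sum_nonneg fun b _ => sq_nonneg _

lemma dsq_comm (p : Fin n → Fin m → ℝ) (i j : Fin n) : dsq p i j = dsq p j i := by
  unfold dsq; exact Finset.sum_congr rfl fun b _ => by ring

lemma dsq_eq_zero_iff (p : Fin n → Fin m → ℝ) (i j : Fin n) :
    dsq p i j = 0 ↔ p i = p j := by
  constructor
  · intro h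
    funext b
    have := (Finset.sum_eq_zero_iff_of_nonneg (fun b _ => sq_nonneg (p i b - p j b))).1 h
      b (Finset.mem_univ b)
    have := sq_eq_zero_iff.1 this
    linarith
  · intro h; unfold dsq; rw [h]; simp

lemma dsq_pos_of_ne {p : Fin n → Fin m → ℝ} {i j : Fin n} (h : p i ≠ p j) :
    0 < dsq p i j :=
  lt_of_le_of_ne (dsq_nonneg p i j) (fun h0 => h ((dsq_eq_zero_iff p i j).1 h0.symm))

lemma dsq_congr {p : Fin n → Fin m → ℝ} {i i' : Fin n} (h : p i = p i') (j : Fin n) :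
    dsq p i j = dsq p i' j := by
  unfold dsq; rw [h]

/-- evaluation continuous linear map -/
noncomputable def evCLM (i : Fin n) (b : Fin m) : (Fin n → Fin m → ℝ) →L[ℝ] ℝ :=
  (ContinuousLinearMap.proj (R := ℝ) (φ := fun _ : Fin m => ℝ) b).comp
    (ContinuousLinearMap.proj (R := ℝ) (φ := fun _ : Fin n => Fin m → ℝ) i)

@[simp] lemma evCLM_apply (i : Fin n) (b : Fin m) (v : Fin n → Fin m → ℝ) :
    evCLM i b v = v i b := rfl

lemma hasFDerivAt_dsq (p : Fin n → Fin m → ℝ) (i j : Fin n) :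
    ∃ D : (Fin n → Fin m → ℝ) →L[ℝ] ℝ,
      HasFDerivAt (fun p' => dsq p' i j) D p ∧ D p = 2 * dsq p i j := by
  have hb : ∀ b : Fin m, HasFDerivAt (fun p' : Fin n → Fin m → ℝ => (p' i b - p' j b) ^ 2)
      ((p i b - p j b) • (evCLM i b - evCLM j b)
        + (p i b - p j b) • (evCLM i b - evCLM j b)) p := by
    intro b
    have h1 : HasFDerivAt (fun p' : Fin n → Fin m → ℝ => p' i b - p' j b)
        (evCLM i b - evCLM j b) p := by
      exact (evCLM i b).hasFDerivAt.sub (evCLM j b).hasFDerivAt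
    have h2 := h1.mul h1
    exact h2.congr_of_eventuallyEq (Filter.Eventually.of_forall fun z => by
      show (z i b - z j b) ^ 2 = (z i b - z j b) * (z i b - z j b); ring)
  refine ⟨∑ b, ((p i b - p j b) • (evCLM i b - evCLM j b)
        + (p i b - p j b) • (evCLM i b - evCLM j b)), ?_, ?_⟩
  · exact HasFDerivAt.fun_sum fun b _ => hb b
  · simp only [ContinuousLinearMap.coe_sum', Finset.sum_apply,
      ContinuousLinearMap.add_apply, ContinuousLinearMap.smul_apply,
      ContinuousLinearMap.sub_apply, evCLM_apply, smul_eq_mul]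
    rw [dsq, Finset.mul_sum]
    exact Finset.sum_congr rfl fun b _ => by ring

lemma continuousAt_dsq (p : Fin n → Fin m → ℝ) (i j : Fin n) :
    ContinuousAt (fun p' => dsq p' i j) p := by
  obtain ⟨D, hD, -⟩ := hasFDerivAt_dsq p i j
  exact hD.continuousAt

end Dsq
section BarAdj

variable {n m : ℕ} {sA qA R : ℝ}

lemma barAdj_nonneg (hsA : 0 < sA) (hqA : 0 < qA) (p : Fin n → Fin m → ℝ) (i j : Fin n) :
    0 ≤ barAdj sA qA R p i j := by
  unfold barAdj; split_ifs with h
  · exact le_of_lt (sigmaFn_pos hqA hsA (pow_pos (sub_pos.2 h.2) 3))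
  · exact le_refl 0

lemma barAdj_pos_cond {p : Fin n → Fin m → ℝ} {i j : Fin n}
    (h : 0 < barAdj sA qA R p i j) : i ≠ j ∧ dsq p i j < R ^ 2 := by
  by_contra hc
  unfold barAdj at h; rw [if_neg hc] at h; exact lt_irrefl 0 h

lemma barAdj_abs_le (hsA : 0 < sA) (hqA : 0 < qA) (p : Fin n → Fin m → ℝ) (i j : Fin n) :
    |barAdj sA qA R p i j| ≤ sA * |R ^ 2 - dsq p i j| ^ 3 := by
  unfold barAdj; split_ifs with h
  · have hy : 0 < R ^ 2 - dsq p i j := sub_pos.2 h.2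
    have h0 : 0 ≤ sigmaFn sA qA ((R ^ 2 - dsq p i j) ^ 3) :=
      le_of_lt (sigmaFn_pos hqA hsA (pow_pos hy 3))
    rw [abs_of_nonneg h0, abs_of_pos hy]
    exact sigmaFn_le hqA hsA (le_of_lt (pow_pos hy 3))
  · simp only [abs_zero]
    positivity

lemma barAdj_hasFDerivAt (hsA : 0 < sA) (hqA : 0 < qA)
    (p : Fin n → Fin m → ℝ) (i j : Fin n) :
    ∃ A : (Fin n → Fin m → ℝ) →L[ℝ] ℝ,
      HasFDerivAt (fun p' => barAdj sA qA R p' i j) A p ∧ A p ≤ 0 ∧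
      (0 < dsq p i j → dsq p i j < R ^ 2 → i ≠ j → A p < 0) := by
  by_cases hij : i = j
  · refine ⟨0, ?_, by simp, fun _ _ hij' => absurd hij hij'⟩
    have : (fun p' : Fin n → Fin m → ℝ => barAdj sA qA R p' i j) = fun _ => 0 := by
      funext p'; unfold barAdj; rw [if_neg]; rintro ⟨hne, -⟩; exact hne hij
    rw [this]; exact hasFDerivAt_const 0 p
  rcases lt_trichotomy (dsq p i j) (R ^ 2) with hlt | heq | hgt
  · -- interior case
    obtain ⟨D, hD, hDp⟩ := hasFDerivAt_dsq p i j
    have h1 : HasFDerivAt (fun p' => R ^ 2 - dsq p' i j) (-D) p := hD.const_sub _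
    have h2 := (h1.mul h1).mul h1
    have h3 : HasFDerivAt (fun p' => (R ^ 2 - dsq p' i j) ^ 3)
        (((R ^ 2 - dsq p i j) * (R ^ 2 - dsq p i j)) • (-D) +
          (R ^ 2 - dsq p i j) • ((R ^ 2 - dsq p i j) • (-D) + (R ^ 2 - dsq p i j) • (-D))) p := by
      refine h2.congr_of_eventuallyEq (Filter.Eventually.of_forall fun z => ?_)
      show (R ^ 2 - dsq z i j) ^ 3 = _
      simp only [Pi.mul_apply]; ring
    have hσ := hasDerivAt_sigmaFn (s := sA) (q := qA) hqA ((R ^ 2 - dsq p i j) ^ 3)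
    have h4 := hσ.comp_hasFDerivAt p h3
    have h5 : HasFDerivAt (fun p' => barAdj sA qA R p' i j)
        (sigmaDeriv sA qA ((R ^ 2 - dsq p i j) ^ 3) •
          (((R ^ 2 - dsq p i j) * (R ^ 2 - dsq p i j)) • (-D) +
            (R ^ 2 - dsq p i j) • ((R ^ 2 - dsq p i j) • (-D) + (R ^ 2 - dsq p i j) • (-D)))) p := by
      refine h4.congr_of_eventuallyEq ?_
      have hev : ∀ᶠ p' in nhds p, dsq p' i j ∈ Set.Iio (R ^ 2) :=
        (continuousAt_dsq p i j).eventually_mem (Iio_mem_nhds hlt)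
      filter_upwards [hev] with p' hp'
      show barAdj sA qA R p' i j = _
      unfold barAdj
      rw [if_pos ⟨hij, hp'⟩]
      rfl
    refine ⟨_, h5, ?_, ?_⟩
    · have hval : (sigmaDeriv sA qA ((R ^ 2 - dsq p i j) ^ 3) •
          (((R ^ 2 - dsq p i j) * (R ^ 2 - dsq p i j)) • (-D) +
            (R ^ 2 - dsq p i j) • ((R ^ 2 - dsq p i j) • (-D) + (R ^ 2 - dsq p i j) • (-D)))) p
          = sigmaDeriv sA qA ((R ^ 2 - dsq p i j) ^ 3) *
              (-(6 * dsq p i j * (R ^ 2 - dsq p i j) ^ 2)) := by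
        simp only [ContinuousLinearMap.smul_apply, ContinuousLinearMap.add_apply,
          ContinuousLinearMap.neg_apply, smul_eq_mul, hDp]
        ring
      rw [hval, mul_neg]
      have hσpos := sigmaDeriv_pos (y := (R ^ 2 - dsq p i j) ^ 3) hqA hsA
      have hd0 := dsq_nonneg p i j
      have hc : 0 < R ^ 2 - dsq p i j := sub_pos.2 hlt
      apply neg_nonpos.2
      apply mul_nonneg (le_of_lt hσpos)
      have : (0:ℝ) ≤ 6 * dsq p i j := by linarith
      exact mul_nonneg this (sq_nonneg _)
    · intro hdpos _ _
      have hval : (sigmaDeriv sA qA ((R ^ 2 - dsq p i j) ^ 3) •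
          (((R ^ 2 - dsq p i j) * (R ^ 2 - dsq p i j)) • (-D) +
            (R ^ 2 - dsq p i j) • ((R ^ 2 - dsq p i j) • (-D) + (R ^ 2 - dsq p i j) • (-D)))) p
          = sigmaDeriv sA qA ((R ^ 2 - dsq p i j) ^ 3) *
              (-(6 * dsq p i j * (R ^ 2 - dsq p i j) ^ 2)) := by
        simp only [ContinuousLinearMap.smul_apply, ContinuousLinearMap.add_apply,
          ContinuousLinearMap.neg_apply, smul_eq_mul, hDp]
        ring
      rw [hval, mul_neg]
      have hσpos := sigmaDeriv_pos (y := (R ^ 2 - dsq p i j) ^ 3) hqA hsA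
      have hc : 0 < R ^ 2 - dsq p i j := sub_pos.2 hlt
      apply neg_neg_iff_pos.mpr
      apply mul_pos hσpos
      have : (0:ℝ) < 6 * dsq p i j := by linarith
      exact mul_pos this (pow_pos hc 2)
  · -- boundary case
    obtain ⟨D, hD, hDp⟩ := hasFDerivAt_dsq p i j
    have hO := hD.isBigO_sub
    rw [Asymptotics.isBigO_iff] at hO
    obtain ⟨C, hC⟩ := hO
    set C' := max C 1 with hC'def
    have hC'pos : (0:ℝ) < C' := lt_of_lt_of_le one_pos (le_max_right _ _)
    have hC2 : ∀ᶠ p' in nhds p, |dsq p' i j - dsq p i j| ≤ C' * ‖p' - p‖ := by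
      filter_upwards [hC] with p' h
      calc |dsq p' i j - dsq p i j| ≤ C * ‖p' - p‖ := h
        _ ≤ C' * ‖p' - p‖ := mul_le_mul_of_nonneg_right (le_max_left _ _) (norm_nonneg _)
    refine ⟨0, ?_, le_refl 0, fun _ h2 _ => absurd h2 (by rw [heq]; exact lt_irrefl _)⟩
    have hf0 : barAdj sA qA R p i j = 0 := by
      unfold barAdj; rw [if_neg]; rintro ⟨-, hlt'⟩; rw [heq] at hlt'; exact lt_irrefl _ hlt'
    rw [hasFDerivAt_iff_isLittleO_nhds_zero]
    simp only [hf0, ContinuousLinearMap.zero_apply, sub_zero]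
    rw [Asymptotics.isLittleO_iff]
    intro c hc
    have htend : Filter.Tendsto (fun h : Fin n → Fin m → ℝ => p + h) (nhds 0) (nhds p) := by
      have hcont : Continuous (fun h : Fin n → Fin m → ℝ => p + h) :=
        continuous_const.add continuous_id
      have := hcont.tendsto (0 : Fin n → Fin m → ℝ)
      simpa using this
    set δ0 := Real.sqrt (c / (sA * C' ^ 3)) with hδ0
    have hδ0pos : 0 < δ0 := Real.sqrt_pos.2 (div_pos hc (by positivity))
    have hball : ∀ᶠ h : Fin n → Fin m → ℝ in nhds 0, ‖h‖ < δ0 := by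
      filter_upwards [Metric.ball_mem_nhds (0 : Fin n → Fin m → ℝ) hδ0pos] with h hh
      simpa [dist_eq_norm] using hh
    filter_upwards [htend.eventually hC2, hball] with h h1 h2
    have hps : ‖p + h - p‖ = ‖h‖ := by rw [add_sub_cancel_left]
    rw [hps] at h1
    have hb := barAdj_abs_le (R := R) hsA hqA (p + h) i j
    have heq2 : |R ^ 2 - dsq (p + h) i j| = |dsq (p + h) i j - dsq p i j| := by
      rw [heq, abs_sub_comm]
    calc ‖barAdj sA qA R (p + h) i j‖
        ≤ sA * |R ^ 2 - dsq (p + h) i j| ^ 3 := hb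
      _ = sA * |dsq (p + h) i j - dsq p i j| ^ 3 := by rw [heq2]
      _ ≤ sA * (C' * ‖h‖) ^ 3 := by
          apply mul_le_mul_of_nonneg_left _ (le_of_lt hsA)
          exact pow_le_pow_left₀ (abs_nonneg _) h1 3
      _ = (sA * C' ^ 3 * ‖h‖ ^ 2) * ‖h‖ := by ring
      _ ≤ (sA * C' ^ 3 * δ0 ^ 2) * ‖h‖ := by
          apply mul_le_mul_of_nonneg_right _ (norm_nonneg _)
          apply mul_le_mul_of_nonneg_left _ (by positivity)
          exact pow_le_pow_left₀ (norm_nonneg _) (le_of_lt h2) 2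
      _ = c * ‖h‖ := by
          congr 1
          rw [hδ0, Real.sq_sqrt (by positivity)]
          field_simp
  · -- outside case
    refine ⟨0, ?_, le_refl 0, fun _ h2 _ => absurd h2 (not_lt.2 (le_of_lt hgt))⟩
    have hev : ∀ᶠ p' in nhds p, dsq p' i j ∈ Set.Ioi (R ^ 2) :=
      (continuousAt_dsq p i j).eventually_mem (Ioi_mem_nhds hgt)
    refine (hasFDerivAt_const (0:ℝ) p).congr_of_eventuallyEq ?_
    filter_upwards [hev] with p' hp'
    show barAdj sA qA R p' i j = 0
    unfold barAdj; rw [if_neg]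
    rintro ⟨-, hlt'⟩
    exact absurd hp' (not_lt.2 (le_of_lt hlt'))

end BarAdj
section PiBarLemmas

variable {n m : ℕ} {s q sA qA R ε : ℝ} {l r δ : ℕ} {p : Fin n → Fin m → ℝ}

lemma piBar_leader {j : Fin n} (hj : (j : ℕ) < l) (k : ℕ) :
    piBar s q sA qA R l r k p j = 1 := by
  cases k <;> simp [piBar, hj]

lemma piBar_nonneg (hε : 0 < ε)
    (hsafe : ∀ j : Fin n, l ≤ (j : ℕ) → ∀ k : ℕ, 1 ≤ k → k ≤ δ →
      ε < piBar s q sA qA R l r k p j)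
    {k : ℕ} (hk : k ≤ δ) (i : Fin n) : 0 ≤ piBar s q sA qA R l r k p i := by
  cases k with
  | zero =>
    simp only [piBar]
    split_ifs <;> norm_num
  | succ k =>
    by_cases hi : (i : ℕ) < l
    · rw [piBar_leader hi]; norm_num
    · have := hsafe i (not_lt.1 hi) (k + 1) (Nat.succ_le_succ (Nat.zero_le k)) hk
      linarith

lemma piBar_step_deriv (hs : 0 < s) (hq0 : 0 < q) (hsA : 0 < sA) (hqA0 : 0 < qA)
    (hε : 0 < ε)
    (hsafe : ∀ j : Fin n, l ≤ (j : ℕ) → ∀ k : ℕ, 1 ≤ k → k ≤ δ →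
      ε < piBar s q sA qA R l r k p j)
    {k : ℕ} (hk : k + 1 ≤ δ) {j : Fin n} (hj : ¬ (j : ℕ) < l)
    (IH : ∀ i : Fin n, ∃ L : (Fin n → Fin m → ℝ) →L[ℝ] ℝ,
      HasFDerivAt (fun p' => piBar s q sA qA R l r k p' i) L p ∧ L p ≤ 0) :
    ∃ L : (Fin n → Fin m → ℝ) →L[ℝ] ℝ,
      HasFDerivAt (fun p' => piBar s q sA qA R l r (k + 1) p' j) L p ∧ L p ≤ 0 ∧
      ∀ i0 : Fin n, 0 < piBar s q sA qA R l r k p i0 → 0 < dsq p i0 j →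
        dsq p i0 j < R ^ 2 → L p < 0 := by
  choose L hL hL0 using IH
  choose A hA hA0 hAneg using fun i => barAdj_hasFDerivAt (R := R) hsA hqA0 p i j
  have hsum : HasFDerivAt
      (fun p' => (∑ i, barAdj sA qA R p' i j * piBar s q sA qA R l r k p' i) - (r : ℝ))
      (∑ i, (barAdj sA qA R p i j • L i + piBar s q sA qA R l r k p i • A i)) p :=
    (HasFDerivAt.fun_sum (fun i _ => (hA i).fun_mul (hL i))).sub_const _
  set T := (∑ i, barAdj sA qA R p i j * piBar s q sA qA R l r k p i) - (r : ℝ) with hT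
  have hσ := hasDerivAt_sigmaFn (s := s) (q := q) hq0 T
  have htot := hσ.comp_hasFDerivAt p hsum
  set M := ∑ i, (barAdj sA qA R p i j • L i + piBar s q sA qA R l r k p i • A i) with hM
  have hσpos := sigmaDeriv_pos (s := s) (q := q) (y := T) hq0 hs
  have hMp : M p = ∑ i, (barAdj sA qA R p i j * L i p
      + piBar s q sA qA R l r k p i * A i p) := by
    simp [hM, ContinuousLinearMap.coe_sum', Finset.sum_apply,
      ContinuousLinearMap.add_apply, ContinuousLinearMap.smul_apply, smul_eq_mul]
  have hterm : ∀ i : Fin n, barAdj sA qA R p i j * L i p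
      + piBar s q sA qA R l r k p i * A i p ≤ 0 := by
    intro i
    have h1 : barAdj sA qA R p i j * L i p ≤ 0 :=
      mul_nonpos_of_nonneg_of_nonpos (barAdj_nonneg hsA hqA0 p i j) (hL0 i)
    have h2 : piBar s q sA qA R l r k p i * A i p ≤ 0 :=
      mul_nonpos_of_nonneg_of_nonpos
        (piBar_nonneg hε hsafe (Nat.le_of_succ_le hk) i) (hA0 i)
    linarith
  refine ⟨sigmaDeriv s q T • M, ?_, ?_, ?_⟩
  · refine htot.congr_of_eventuallyEq (Filter.Eventually.of_forall fun z => ?_)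
    show piBar s q sA qA R l r (k + 1) z j = _
    simp [piBar, hj, Function.comp]
  · have : (sigmaDeriv s q T • M) p = sigmaDeriv s q T * M p := rfl
    rw [this]
    apply mul_nonpos_of_nonneg_of_nonpos (le_of_lt hσpos)
    rw [hMp]
    exact Finset.sum_nonpos fun i _ => hterm i
  · intro i0 hπ hd hdR
    have hne : i0 ≠ j := by
      intro he
      rw [he] at hd
      rw [(dsq_eq_zero_iff p j j).2 rfl] at hd
      exact lt_irrefl 0 hd
    have hstrict : barAdj sA qA R p i0 j * L i0 p
        + piBar s q sA qA R l r k p i0 * A i0 p < 0 := by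
      have h1 : barAdj sA qA R p i0 j * L i0 p ≤ 0 :=
        mul_nonpos_of_nonneg_of_nonpos (barAdj_nonneg hsA hqA0 p i0 j) (hL0 i0)
      have h2 : piBar s q sA qA R l r k p i0 * A i0 p < 0 :=
        mul_neg_of_pos_of_neg hπ (hAneg i0 hd hdR hne)
      linarith
    have hMneg : M p < 0 := by
      rw [hMp]
      have := Finset.sum_lt_sum (s := (Finset.univ : Finset (Fin n)))
        (f := fun i => barAdj sA qA R p i j * L i p
          + piBar s q sA qA R l r k p i * A i p)
        (g := fun _ => (0 : ℝ))
        (fun i _ => hterm i) ⟨i0, Finset.mem_univ i0, hstrict⟩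
      simpa using this
    have : (sigmaDeriv s q T • M) p = sigmaDeriv s q T * M p := rfl
    rw [this]
    exact mul_neg_of_pos_of_neg hσpos hMneg

lemma piBar_deriv_all (hs : 0 < s) (hq0 : 0 < q) (hsA : 0 < sA) (hqA0 : 0 < qA)
    (hε : 0 < ε)
    (hsafe : ∀ j : Fin n, l ≤ (j : ℕ) → ∀ k : ℕ, 1 ≤ k → k ≤ δ →
      ε < piBar s q sA qA R l r k p j) :
    ∀ k : ℕ, k ≤ δ → ∀ j : Fin n, ∃ L : (Fin n → Fin m → ℝ) →L[ℝ] ℝ,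
      HasFDerivAt (fun p' => piBar s q sA qA R l r k p' j) L p ∧ L p ≤ 0 := by
  intro k
  induction k with
  | zero =>
    intro _ j
    refine ⟨0, ?_, le_refl 0⟩
    have : (fun p' : Fin n → Fin m → ℝ => piBar s q sA qA R l r 0 p' j)
        = fun _ => (if (j : ℕ) < l then (1 : ℝ) else 0) := rfl
    rw [this]
    exact hasFDerivAt_const _ p
  | succ k ih =>
    intro hk j
    by_cases hj : (j : ℕ) < l
    · refine ⟨0, ?_, le_refl 0⟩
      have : (fun p' : Fin n → Fin m → ℝ => piBar s q sA qA R l r (k + 1) p' j)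
          = fun _ => (1 : ℝ) := by
        funext p'; simp [piBar, hj]
      rw [this]
      exact hasFDerivAt_const _ p
    · obtain ⟨L, h1, h2, _⟩ :=
        piBar_step_deriv hs hq0 hsA hqA0 hε hsafe hk hj (ih (Nat.le_of_succ_le hk))
      exact ⟨L, h1, h2⟩

lemma exists_pos_term (hs : 0 < s) (hq0 : 0 < q) (hsA : 0 < sA) (hqA0 : 0 < qA)
    (hε : 0 < ε) {k : ℕ} {g : Fin n} (hg : ¬ (g : ℕ) < l)
    (hnn : ∀ i : Fin n, 0 ≤ piBar s q sA qA R l r k p i)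
    (hgt : ε < piBar s q sA qA R l r (k + 1) p g) :
    ∃ i : Fin n, 0 < barAdj sA qA R p i g ∧ 0 < piBar s q sA qA R l r k p i := by
  have hform : piBar s q sA qA R l r (k + 1) p g
      = sigmaFn s q ((∑ i, barAdj sA qA R p i g * piBar s q sA qA R l r k p i) - (r : ℝ)) := by
    simp [piBar, hg]
  rw [hform] at hgt
  set T := (∑ i, barAdj sA qA R p i g * piBar s q sA qA R l r k p i) - (r : ℝ) with hTd
  have hT : 0 < T := by
    by_contra hTn
    have := sigmaFn_nonpos hq0 hs (not_lt.1 hTn)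
    linarith
  have hsumpos : 0 < ∑ i, barAdj sA qA R p i g * piBar s q sA qA R l r k p i := by
    have : (0 : ℝ) ≤ (r : ℝ) := Nat.cast_nonneg r
    rw [hTd] at hT
    linarith
  have hexists : ∃ i : Fin n, 0 < barAdj sA qA R p i g * piBar s q sA qA R l r k p i := by
    by_contra hc
    push_neg at hc
    have := Finset.sum_nonpos (s := (Finset.univ : Finset (Fin n)))
      (f := fun i => barAdj sA qA R p i g * piBar s q sA qA R l r k p i)
      (fun i _ => hc i)
    linarith
  obtain ⟨i, hi⟩ := hexists
  have ha0 : 0 ≤ barAdj sA qA R p i g := barAdj_nonneg hsA hqA0 p i g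
  have hb0 : 0 ≤ piBar s q sA qA R l r k p i := hnn i
  have ha : 0 < barAdj sA qA R p i g := by
    rcases ha0.lt_or_eq with h | h
    · exact h
    · exfalso; rw [← h, zero_mul] at hi; exact lt_irrefl 0 hi
  have hb : 0 < piBar s q sA qA R l r k p i := by
    by_contra hbn
    have := mul_nonpos_of_nonneg_of_nonpos ha0 (not_lt.1 hbn)
    linarith
  exact ⟨i, ha, hb⟩

end PiBarLemmas

section Graph

variable {n m : ℕ} {R : ℝ} {p : Fin n → Fin m → ℝ}

lemma walk_pos_neighbor {x y : Fin n} (wk : (commGraph R p).Walk x y)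
    (hxy : p x ≠ p y) : ∃ z : Fin n, 0 < dsq p x z ∧ dsq p x z < R ^ 2 := by
  induction wk with
  | nil => exact absurd rfl hxy
  | @cons a b c hab wbc ih =>
    by_cases hpb : p a = p b
    · have hby : p b ≠ p c := by rw [← hpb]; exact hxy
      obtain ⟨z, hz1, hz2⟩ := ih hby
      refine ⟨z, ?_, ?_⟩
      · rw [dsq_congr hpb z]; exact hz1
      · rw [dsq_congr hpb z]; exact hz2
    · have hadj := hab
      rw [commGraph, SimpleGraph.fromRel_adj] at hadj
      obtain ⟨hne, hor⟩ := hadj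
      have hlt : dsq p a b < R ^ 2 := by
        rcases hor with h | h
        · exact h
        · rwa [dsq_comm]
      exact ⟨b, dsq_pos_of_ne hpb, hlt⟩

lemma exists_pos_neighbor (hconn : (commGraph R p).Connected) {x y : Fin n}
    (hxy : p x ≠ p y) : ∃ z : Fin n, 0 < dsq p x z ∧ dsq p x z < R ^ 2 := by
  obtain ⟨wk⟩ := hconn.preconnected x y
  exact walk_pos_neighbor wk hxy

end Graph
theorem stmt_17 {n m : ℕ} (l r δ : ℕ) (hl : 0 < l) (hln : l ≤ n) (hr : 0 < r)
    (hδ1 : 1 ≤ δ) (hδf : δ ≤ n - l)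
    (R s q sA qA ε : ℝ) (hR : 0 < R) (hs : 0 < s) (hq0 : 0 < q) (hq1 : q < 1)
    (hsA : 0 < sA) (hqA0 : 0 < qA) (hqA1 : qA < 1) (hε : 0 < ε)
    (p : Fin n → Fin m → ℝ)
    (hconn : (commGraph R p).Connected)
    (hext : ∃ I : Fin n, ∃ b : Fin m, IsExtremeAgent p I b)
    (hsafe : ∀ j : Fin n, l ≤ (j : ℕ) → ∀ k : ℕ, 1 ≤ k → k ≤ δ →
      ε < piBar s q sA qA R l r k p j)
    (w η : Fin n → ℝ) (hw : ∀ j : Fin n, l ≤ (j : ℕ) → 0 < w j)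
    (hη : ∀ j : Fin n, l ≤ (j : ℕ) → 0 < η j)
    (v : Fin n → Fin m → ℝ) :
    ∑ j ∈ Finset.univ.filter (fun j : Fin n => l ≤ (j : ℕ)),
      (w j * Real.exp (-(w j * (fderiv ℝ (hBarrier s q sA qA R ε l r δ j) p v +
          η j * hBarrier s q sA qA R ε l r δ j p)))) •
        fderiv ℝ (hBarrier s q sA qA R ε l r δ j) p ≠ 0 := by
  classical
  -- basic facts
  have hln' : l < n := by omega
  have hn2 : 2 ≤ n := by omega
  obtain ⟨I, b, hI⟩ := hext
  have hIne : ∀ w : Fin n, w ≠ I → p I ≠ p w := by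
    intro w hw heq
    have hb : p I b = p w b := by rw [heq]
    rcases hI with h | h
    · exact absurd hb (ne_of_gt (h w hw))
    · exact absurd hb (ne_of_lt (h w hw))
  -- the distinguished follower
  set j0 : Fin n := ⟨l, hln'⟩ with hj0def
  have hj0l : ¬ (j0 : ℕ) < l := by simp [hj0def]
  have hj0f : l ≤ (j0 : ℕ) := le_of_not_gt hj0l
  -- j0 has a neighbor at positive distance
  have hx0 : ∃ z : Fin n, 0 < dsq p j0 z ∧ dsq p j0 z < R ^ 2 := by
    by_cases hji : j0 = I
    · haveI : Nontrivial (Fin n) := Fin.nontrivial_iff_two_le.mpr hn2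
      obtain ⟨y, hy⟩ := exists_ne I
      have : p j0 ≠ p y := by rw [hji]; exact hIne y hy
      exact exists_pos_neighbor hconn this
    · exact exists_pos_neighbor hconn (Ne.symm (hIne j0 (by exact hji)))
  obtain ⟨z, hz1, hz2⟩ := hx0
  -- nonneg values at every level up to δ
  have hnn : ∀ k : ℕ, k ≤ δ → ∀ i : Fin n, 0 ≤ piBar s q sA qA R l r k p i :=
    fun k hk i => piBar_nonneg hε hsafe hk i
  -- key strictness source
  have hS : ∃ jf i : Fin n, l ≤ (jf : ℕ) ∧ 0 < dsq p i jf ∧ dsq p i jf < R ^ 2 ∧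
      0 < piBar s q sA qA R l r (δ - 1) p i := by
    by_cases hzl : (z : ℕ) < l
    · exact ⟨j0, z, hj0f, by rwa [dsq_comm], by rwa [dsq_comm],
        by rw [piBar_leader hzl]; norm_num⟩
    · by_cases hδ2 : 2 ≤ δ
      · refine ⟨j0, z, hj0f, by rwa [dsq_comm], by rwa [dsq_comm], ?_⟩
        have := hsafe z (le_of_not_gt hzl) (δ - 1) (by omega) (by omega)
        linarith
      · -- δ = 1
        have hδeq : δ = 1 := by omega
        by_cases hgood : ∃ g lam : Fin n, l ≤ (g : ℕ) ∧ (lam : ℕ) < l ∧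
            0 < dsq p lam g ∧ dsq p lam g < R ^ 2
        · obtain ⟨g, lam, hg, hlam, hd1, hd2⟩ := hgood
          exact ⟨g, lam, hg, hd1, hd2, by rw [piBar_leader hlam]; norm_num⟩
        · exfalso
          push_neg at hgood
          -- z is a follower; it has a leader neighbor
          have hz1' := hsafe z (le_of_not_gt hzl) 1 le_rfl (by omega)
          have hnn0 : ∀ i : Fin n, 0 ≤ piBar s q sA qA R l r 0 p i :=
            hnn 0 (by omega)
          obtain ⟨lam, hba, hπ0⟩ := exists_pos_term (l := l) (r := r) hs hq0 hsA hqA0 hε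
            hzl hnn0 (by simpa using hz1')
          have hlaml : (lam : ℕ) < l := by
            by_contra hc
            have : piBar s q sA qA R l r 0 p lam = 0 := by
              simp [piBar, hc]
            rw [this] at hπ0
            exact lt_irrefl 0 hπ0
          obtain ⟨hlamz, hdlamz⟩ := barAdj_pos_cond hba
          -- by hgood, lam coincides with z
          have hzerozlam : dsq p lam z = 0 := by
            by_contra hc
            have hpos : 0 < dsq p lam z :=
              lt_of_le_of_ne (dsq_nonneg p lam z) (Ne.symm hc)
            exact absurd hdlamz (not_lt.2 (hgood z lam (le_of_not_gt hzl) hlaml hpos))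
          have hplam : p lam = p z := (dsq_eq_zero_iff p lam z).1 hzerozlam
          -- then lam is a positive-distance leader neighbor of j0
          have hd1 : 0 < dsq p lam j0 := by
            rw [dsq_congr hplam j0, dsq_comm]; exact hz1
          have hd2 : dsq p lam j0 < R ^ 2 := by
            rw [dsq_congr hplam j0, dsq_comm]; exact hz2
          exact absurd hd2 (not_lt.2 (hgood j0 lam hj0f hlaml hd1))
  obtain ⟨jf, istar, hjf, hd1, hd2, hπstar⟩ := hS
  -- derivative data for all followers
  have hder : ∀ j : Fin n, ∃ L : (Fin n → Fin m → ℝ) →L[ℝ] ℝ,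
      HasFDerivAt (fun p' => piBar s q sA qA R l r δ p' j) L p ∧ L p ≤ 0 ∧
      (j = jf → L p < 0) := by
    intro j
    by_cases hj : j = jf
    · subst hj
      have hfol : ¬ (j : ℕ) < l := not_lt.2 hjf
      have hδs : δ - 1 + 1 = δ := by omega
      have hk : δ - 1 + 1 ≤ δ := by omega
      obtain ⟨L, h1, h2, h3⟩ := piBar_step_deriv hs hq0 hsA hqA0 hε hsafe hk hfol
        (fun i => piBar_deriv_all hs hq0 hsA hqA0 hε hsafe (δ - 1) (by omega) i)
      rw [hδs] at h1
      exact ⟨L, h1, h2, fun _ => h3 istar hπstar hd1 hd2⟩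
    · obtain ⟨L, h1, h2⟩ := piBar_deriv_all hs hq0 hsA hqA0 hε hsafe δ le_rfl j
      exact ⟨L, h1, h2, fun he => absurd he hj⟩
  choose L hL hL0 hLs using hder
  have hfd : ∀ j : Fin n, fderiv ℝ (hBarrier s q sA qA R ε l r δ j) p = L j := by
    intro j
    have hB : HasFDerivAt (hBarrier s q sA qA R ε l r δ j) (L j) p := (hL j).sub_const ε
    exact hB.fderiv
  intro hzero
  simp only [hfd] at hzero
  have happ := congrArg (fun T : (Fin n → Fin m → ℝ) →L[ℝ] ℝ => T p) hzero
  simp only [ContinuousLinearMap.coe_sum', Finset.sum_apply,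
    ContinuousLinearMap.coe_smul', Pi.smul_apply, smul_eq_mul,
    ContinuousLinearMap.zero_apply] at happ
  have key : ∀ c : Fin n → ℝ, (∀ j : Fin n, l ≤ (j : ℕ) → 0 < c j) →
      (∑ j ∈ Finset.univ.filter (fun j : Fin n => l ≤ (j : ℕ)), c j * L j p) < 0 := by
    intro c hcpos
    have hmem : jf ∈ Finset.univ.filter (fun j : Fin n => l ≤ (j : ℕ)) := by
      simp [hjf]
    have := Finset.sum_lt_sum
      (s := Finset.univ.filter (fun j : Fin n => l ≤ (j : ℕ)))
      (f := fun j => c j * L j p) (g := fun _ => (0 : ℝ))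
      (fun j hj => mul_nonpos_of_nonneg_of_nonpos
        (le_of_lt (hcpos j (Finset.mem_filter.1 hj).2)) (hL0 j))
      ⟨jf, hmem, mul_neg_of_pos_of_neg (hcpos jf hjf) (hLs jf rfl)⟩
    simpa using this
  exact absurd happ (ne_of_lt (key _ (fun j hj => mul_pos (hw j hj) (Real.exp_pos _))))
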